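/- Let a,b,c ≥ 3 with (a,b,c) ≠ (3,3,3), and consider L = L(a,b,c) with dualizing element ω, dominant element δ⃗ = (a−2)x₁+(b−2)x₂+(c−2)x₃, and Φ = {x ∈ L : 0 ≤ x ≤ δ⃗}. Let U = ℤc⃗ + ℤω. Then Φ + U = L. Moreover, for (a,b,c) = (3,3,3) this fails: the element 2x₁ + x₂ does not lie in Φ + U. -/

import Mathlib

/-- The subgroup of relations defining L(a,b,c). -/
def LRel (a b c : ℕ) : AddSubgroup (ℤ × ℤ × ℤ) :=
  AddSubgroup.closure {((a : ℤ), -(b : ℤ), 0), ((0 : ℤ), (b : ℤ), -(c : ℤ))}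

/-- The rank-one abelian group L(a,b,c) on generators x₁,x₂,x₃ with a·x₁ = b·x₂ = c·x₃. -/
abbrev LGrp (a b c : ℕ) := (ℤ × ℤ × ℤ) ⧸ LRel a b c

def Lx1 (a b c : ℕ) : LGrp a b c := QuotientAddGroup.mk (1, 0, 0)
def Lx2 (a b c : ℕ) : LGrp a b c := QuotientAddGroup.mk (0, 1, 0)
def Lx3 (a b c : ℕ) : LGrp a b c := QuotientAddGroup.mk (0, 0, 1)

/-- Canonical element c⃗ = a·x₁. -/
def Lcan (a b c : ℕ) : LGrp a b c := (a : ℤ) • Lx1 a b c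

/-- Dualizing element ω = c⃗ − (x₁+x₂+x₃). -/
def Lomega (a b c : ℕ) : LGrp a b c :=
  Lcan a b c - (Lx1 a b c + Lx2 a b c + Lx3 a b c)

/-- Dominant element δ⃗ = c⃗ + 2ω. -/
def Ldelta (a b c : ℕ) : LGrp a b c := Lcan a b c + (2 : ℤ) • Lomega a b c

/-- The partial order on L given by the positive cone ℕx₁+ℕx₂+ℕx₃ : u ≤ v iff v−u ∈ ℕx₁+ℕx₂+ℕx₃. -/
def Lle (a b c : ℕ) (u v : LGrp a b c) : Prop :=
  ∃ n1 n2 n3 : ℕ,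
    v - u = (n1 : ℤ) • Lx1 a b c + (n2 : ℤ) • Lx2 a b c + (n3 : ℤ) • Lx3 a b c

/-! ### Auxiliary lemmas -/

lemma mk_eq_mk (a b c : ℕ) (u v : ℤ × ℤ × ℤ) :
    (QuotientAddGroup.mk u : LGrp a b c) = QuotientAddGroup.mk v ↔
      ∃ t s : ℤ, v.1 - u.1 = t * a ∧ v.2.1 - u.2.1 = s * b - t * b ∧
        v.2.2 - u.2.2 = -(s * c) := by
  rw [QuotientAddGroup.eq]
  show _ ∈ AddSubgroup.closure _ ↔ _
  rw [AddSubgroup.mem_closure_pair]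
  constructor
  · rintro ⟨m, n, hmn⟩
    rw [Prod.ext_iff, Prod.ext_iff] at hmn
    simp only [Prod.smul_fst, Prod.smul_snd, Prod.fst_add, Prod.snd_add, smul_eq_mul,
      Prod.fst_neg, Prod.snd_neg] at hmn
    obtain ⟨h1, h2, h3⟩ := hmn
    exact ⟨m, n, by linarith, by linarith, by linarith⟩
  · rintro ⟨t, s, h1, h2, h3⟩
    refine ⟨t, s, ?_⟩
    rw [Prod.ext_iff, Prod.ext_iff]
    simp only [Prod.smul_fst, Prod.smul_snd, Prod.fst_add, Prod.snd_add, smul_eq_mul,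
      Prod.fst_neg, Prod.snd_neg]
    refine ⟨by linarith, by linarith, by linarith⟩

lemma comb_eq (a b c : ℕ) (v1 v2 v3 : ℤ) :
    v1 • Lx1 a b c + v2 • Lx2 a b c + v3 • Lx3 a b c = QuotientAddGroup.mk (v1, v2, v3) := by
  simp only [Lx1, Lx2, Lx3, ← QuotientAddGroup.mk_zsmul, ← QuotientAddGroup.mk_add]
  congr 1
  simp [Prod.ext_iff]

lemma comb2_eq (a b c : ℕ) (v : ℤ × ℤ × ℤ) (m k : ℤ) :
    (QuotientAddGroup.mk v : LGrp a b c) + (m • Lcan a b c + k • Lomega a b c)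
      = QuotientAddGroup.mk (v.1 + m * a + k * (a - 1), v.2.1 - k, v.2.2 - k) := by
  simp only [Lcan, Lomega, Lx1, Lx2, Lx3, ← QuotientAddGroup.mk_zsmul,
    ← QuotientAddGroup.mk_add, ← QuotientAddGroup.mk_sub]
  congr 1
  simp only [Prod.ext_iff, Prod.smul_fst, Prod.smul_snd, Prod.fst_add, Prod.snd_add,
    Prod.fst_sub, Prod.snd_sub, smul_eq_mul]
  refine ⟨by ring, by ring, by ring⟩

lemma ldelta_eq (a b c : ℕ) :
    Ldelta a b c = QuotientAddGroup.mk ((3 * (a : ℤ) - 2, -2, -2) : ℤ × ℤ × ℤ) := by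
  simp only [Ldelta, Lcan, Lomega, Lx1, Lx2, Lx3, ← QuotientAddGroup.mk_zsmul,
    ← QuotientAddGroup.mk_add, ← QuotientAddGroup.mk_sub]
  congr 1
  simp only [Prod.ext_iff, Prod.smul_fst, Prod.smul_snd, Prod.fst_add, Prod.snd_add,
    Prod.fst_sub, Prod.snd_sub, smul_eq_mul]
  refine ⟨by ring, by ring, by ring⟩

lemma card_mod_le (a m r : ℕ) (ha : 0 < a) :
    ((Finset.range (a * m)).filter (fun k => k % a = r)).card ≤ m := by
  classical
  have := Finset.card_le_card_of_injOn (f := fun k => k / a)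
    (s := (Finset.range (a * m)).filter (fun k => k % a = r)) (t := Finset.range m)
    (by
      intro k hk
      simp only [Finset.mem_coe, Finset.mem_filter, Finset.mem_range] at hk ⊢
      exact Nat.div_lt_of_lt_mul hk.1)
    (by
      intro k1 h1 k2 h2 h
      simp only [Finset.coe_filter, Set.mem_setOf_eq, Finset.mem_range] at h1 h2
      have h' : k1 / a = k2 / a := h
      calc k1 = a * (k1 / a) + k1 % a := (Nat.div_add_mod k1 a).symm
        _ = a * (k2 / a) + k2 % a := by rw [h', h1.2, h2.2]
        _ = k2 := Nat.div_add_mod k2 a)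
  simpa using this

lemma abc_lt (a b c : ℤ) (ha : 3 ≤ a) (hb : 3 ≤ b) (hc : 3 ≤ c) (h4 : 4 ≤ a) :
    b * c + a * c + a * b < a * (b * c) := by
  nlinarith [mul_nonneg (by linarith : (0:ℤ) ≤ b - 3) (by linarith : (0:ℤ) ≤ c - 3),
    mul_nonneg (by linarith : (0:ℤ) ≤ a - 4)
      (by nlinarith : (0:ℤ) ≤ b * c - b - c - 3),
    mul_nonneg (by linarith : (0:ℤ) ≤ b - 3) (by linarith : (0:ℤ) ≤ c),
    mul_nonneg (by linarith : (0:ℤ) ≤ c - 3) (by linarith : (0:ℤ) ≤ b)]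

lemma exists_good (a b c : ℕ) (ha : 3 ≤ a) (hb : 3 ≤ b) (hc : 3 ≤ c)
    (hne : ¬(a = 3 ∧ b = 3 ∧ c = 3)) (r1 r2 r3 : ℕ) :
    ∃ k : ℕ, k % a ≠ r1 ∧ k % b ≠ r2 ∧ k % c ≠ r3 := by
  classical
  by_contra h
  push_neg at h
  set N := a * (b * c) with hN
  have cover : Finset.range N ⊆
      ((Finset.range N).filter (fun k => k % a = r1)) ∪
      ((Finset.range N).filter (fun k => k % b = r2)) ∪
      ((Finset.range N).filter (fun k => k % c = r3)) := by
    intro k hk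
    simp only [Finset.mem_union, Finset.mem_filter]
    by_cases h1 : k % a = r1
    · exact Or.inl (Or.inl ⟨hk, h1⟩)
    by_cases h2 : k % b = r2
    · exact Or.inl (Or.inr ⟨hk, h2⟩)
    · exact Or.inr ⟨hk, h k h1 h2⟩
  have c1 : ((Finset.range N).filter (fun k => k % a = r1)).card ≤ b * c :=
    card_mod_le a (b * c) r1 (by omega)
  have c2 : ((Finset.range N).filter (fun k => k % b = r2)).card ≤ a * c := by
    have : N = b * (a * c) := by ring
    rw [this]
    exact card_mod_le b (a * c) r2 (by omega)
  have c3 : ((Finset.range N).filter (fun k => k % c = r3)).card ≤ a * b := by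
    have : N = c * (a * b) := by ring
    rw [this]
    exact card_mod_le c (a * b) r3 (by omega)
  have hcard := Finset.card_le_card cover
  rw [Finset.card_range] at hcard
  have hu1 := Finset.card_union_le
    (((Finset.range N).filter (fun k => k % a = r1)) ∪
      ((Finset.range N).filter (fun k => k % b = r2)))
    ((Finset.range N).filter (fun k => k % c = r3))
  have hu2 := Finset.card_union_le
    ((Finset.range N).filter (fun k => k % a = r1))
    ((Finset.range N).filter (fun k => k % b = r2))
  have hlt : b * c + a * c + a * b < N := by
    have h4 : 4 ≤ a ∨ 4 ≤ b ∨ 4 ≤ c := by omega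
    have key : (b : ℤ) * c + a * c + a * b < a * (b * c) := by
      rcases h4 with h4 | h4 | h4
      · exact abc_lt a b c (by exact_mod_cast ha) (by exact_mod_cast hb)
          (by exact_mod_cast hc) (by exact_mod_cast h4)
      · have := abc_lt b a c (by exact_mod_cast hb) (by exact_mod_cast ha)
          (by exact_mod_cast hc) (by exact_mod_cast h4)
        linarith [this]
      · have := abc_lt c a b (by exact_mod_cast hc) (by exact_mod_cast ha)
          (by exact_mod_cast hb) (by exact_mod_cast h4)
        linarith [this]
    have : ((b * c + a * c + a * b : ℕ) : ℤ) < ((a * (b * c) : ℕ) : ℤ) := by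
      push_cast; linarith
    exact_mod_cast this
  omega

theorem shift_cuboid_abc (a b c : ℕ) (ha : 3 ≤ a) (hb : 3 ≤ b) (hc : 3 ≤ c) :
    (¬ (a = 3 ∧ b = 3 ∧ c = 3) →
      ∀ y : LGrp a b c, ∃ x : LGrp a b c,
        (Lle a b c 0 x ∧ Lle a b c x (Ldelta a b c)) ∧
        ∃ m k : ℤ, y = x + (m • Lcan a b c + k • Lomega a b c)) ∧
    ¬ (∃ x : LGrp 3 3 3, (Lle 3 3 3 0 x ∧ Lle 3 3 3 x (Ldelta 3 3 3)) ∧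
        ∃ m k : ℤ, (2 : ℤ) • Lx1 3 3 3 + Lx2 3 3 3
          = x + (m • Lcan 3 3 3 + k • Lomega 3 3 3)) := by
  constructor
  · intro hne y
    obtain ⟨⟨u1, u2, u3⟩, rfl⟩ := QuotientAddGroup.mk_surjective y
    obtain ⟨k, hk1, hk2, hk3⟩ := exists_good a b c ha hb hc hne
      ((((a : ℤ) - 1 - u1) % (a : ℤ)).toNat)
      ((((b : ℤ) - 1 - u2) % (b : ℤ)).toNat)
      ((((c : ℤ) - 1 - u3) % (c : ℤ)).toNat)
    have ha0 : (0 : ℤ) < (a : ℤ) := by exact_mod_cast (by omega : 0 < a)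
    have hb0 : (0 : ℤ) < (b : ℤ) := by exact_mod_cast (by omega : 0 < b)
    have hc0 : (0 : ℤ) < (c : ℤ) := by exact_mod_cast (by omega : 0 < c)
    set l1 := (u1 + (k : ℤ)) % (a : ℤ) with hl1
    set l2 := (u2 + (k : ℤ)) % (b : ℤ) with hl2
    set l3 := (u3 + (k : ℤ)) % (c : ℤ) with hl3
    set q1 := (u1 + (k : ℤ)) / (a : ℤ) with hq1d
    set q2 := (u2 + (k : ℤ)) / (b : ℤ) with hq2d
    set q3 := (u3 + (k : ℤ)) / (c : ℤ) with hq3d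
    have hq1 : (a : ℤ) * q1 + l1 = u1 + k := Int.mul_ediv_add_emod _ _
    have hq2 : (b : ℤ) * q2 + l2 = u2 + k := Int.mul_ediv_add_emod _ _
    have hq3 : (c : ℤ) * q3 + l3 = u3 + k := Int.mul_ediv_add_emod _ _
    have hl1n : 0 ≤ l1 := Int.emod_nonneg _ (by omega)
    have hl2n : 0 ≤ l2 := Int.emod_nonneg _ (by omega)
    have hl3n : 0 ≤ l3 := Int.emod_nonneg _ (by omega)
    have hl1u : l1 < (a : ℤ) := Int.emod_lt_of_pos _ ha0
    have hl2u : l2 < (b : ℤ) := Int.emod_lt_of_pos _ hb0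
    have hl3u : l3 < (c : ℤ) := Int.emod_lt_of_pos _ hc0
    have key : ∀ (p : ℕ) (u : ℤ), 3 ≤ p → k % p ≠ (((p : ℤ) - 1 - u) % (p : ℤ)).toNat →
        (u + (k : ℤ)) % (p : ℤ) ≠ (p : ℤ) - 1 := by
      intro p u hp hkp hcon
      apply hkp
      have hp0 : (0 : ℤ) < (p : ℤ) := by exact_mod_cast (by omega : 0 < p)
      have h1 : Int.ModEq (p : ℤ) (u + (k : ℤ)) ((p : ℤ) - 1) := by
        show (u + (k : ℤ)) % (p : ℤ) = ((p : ℤ) - 1) % (p : ℤ)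
        rw [show ((p : ℤ) - 1) % (p : ℤ) = (p : ℤ) - 1 from
          Int.emod_eq_of_lt (by omega) (by omega)]
        exact hcon
      have h2 : (k : ℤ) ≡ (p : ℤ) - 1 - u [ZMOD (p : ℤ)] := by
        have h3 := Int.ModEq.sub h1 (Int.ModEq.refl u)
        simpa using h3
      have h3 : (k : ℤ) % (p : ℤ) = ((p : ℤ) - 1 - u) % (p : ℤ) := h2
      have hcast : ((k % p : ℕ) : ℤ) = (k : ℤ) % (p : ℤ) := by push_cast; ring
      have hnn : 0 ≤ ((p : ℤ) - 1 - u) % (p : ℤ) := Int.emod_nonneg _ (by omega)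
      omega
    have hne1 : l1 ≠ (a : ℤ) - 1 := key a u1 ha hk1
    have hne2 : l2 ≠ (b : ℤ) - 1 := key b u2 hb hk2
    have hne3 : l3 ≠ (c : ℤ) - 1 := key c u3 hc hk3
    refine ⟨QuotientAddGroup.mk (l1, l2, l3), ⟨⟨l1.toNat, l2.toNat, l3.toNat, ?_⟩,
      ⟨((a : ℤ) - 2 - l1).toNat, ((b : ℤ) - 2 - l2).toNat, ((c : ℤ) - 2 - l3).toNat, ?_⟩⟩,
      q1 + q2 + q3 - (k : ℤ), (k : ℤ), ?_⟩
    · rw [sub_zero, comb_eq, Int.toNat_of_nonneg hl1n, Int.toNat_of_nonneg hl2n,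
        Int.toNat_of_nonneg hl3n]
    · rw [comb_eq, ldelta_eq, ← QuotientAddGroup.mk_sub,
        Int.toNat_of_nonneg (by omega : (0:ℤ) ≤ (a : ℤ) - 2 - l1),
        Int.toNat_of_nonneg (by omega : (0:ℤ) ≤ (b : ℤ) - 2 - l2),
        Int.toNat_of_nonneg (by omega : (0:ℤ) ≤ (c : ℤ) - 2 - l3)]
      rw [mk_eq_mk]
      exact ⟨-2, -1, by simp only [Prod.fst_sub, Prod.snd_sub]; ring,
        by simp only [Prod.fst_sub, Prod.snd_sub]; ring,
        by simp only [Prod.fst_sub, Prod.snd_sub]; ring⟩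
    · rw [comb2_eq, mk_eq_mk]
      exact ⟨q2 + q3, q3, by simp only; linear_combination hq1,
        by simp only; linear_combination hq2, by simp only; linear_combination hq3⟩
  · rintro ⟨x, ⟨⟨n1, n2, n3, hpos⟩, ⟨t1, t2, t3, hle⟩⟩, m, k, heq⟩
    rw [sub_zero, comb_eq] at hpos
    rw [comb_eq, ldelta_eq, hpos, ← QuotientAddGroup.mk_sub, mk_eq_mk] at hle
    have hL : (2 : ℤ) • Lx1 3 3 3 + Lx2 3 3 3
        = QuotientAddGroup.mk ((2 : ℤ), 1, 0) := by
      have : Lx2 3 3 3 = (1 : ℤ) • Lx2 3 3 3 + (0 : ℤ) • Lx3 3 3 3 := by simp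
      rw [this, ← add_assoc, comb_eq]
    rw [hL, hpos, comb2_eq, mk_eq_mk] at heq
    obtain ⟨t, s, e1, e2, e3⟩ := hle
    obtain ⟨t', s', f1, f2, f3⟩ := heq
    simp only [Prod.fst_sub, Prod.snd_sub] at e1 e2 e3 f1 f2 f3
    push_cast at e1 e2 e3 f1 f2 f3
    have h3 : k % 3 = 0 ∨ k % 3 = 1 ∨ k % 3 = 2 := by omega
    have hm : (n1 : ℤ) + n2 + n3 = 3 - 3 * m := by linarith
    have ht : (t1 : ℤ) + t2 + t3 = 3 * m := by linarith
    have hm01 : m = 0 ∨ m = 1 := by omega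
    rcases hm01 with hm0 | hm0 <;> rcases h3 with h3 | h3 | h3 <;> omega
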